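/- arXiv:2104.01880 — 2 statements merged into one kernel-verified Lean document; each statement's English description precedes it below -/
import Mathlib

section
/- For every real number u with |u| < 2π (u ≠ 0) and every real number x, one has sinh((x−1/2)u)/(2·sinh(u/2)) = Σ_{k=0}^{∞} (B_{2k+1}(x)/(2k+1)!)·u^{2k}. -/
open Real

/-- Evaluation at a real `x` of the `n`-th Bernoulli polynomial, defined by the generating
function `∑_{n ≥ 0} (Bₙ(x)/n!) tⁿ = t e^{tx}/(eᵗ - 1)` for `|t| < 2π`. -/
noncomputable def bernoulliPoly (n : ℕ) (x : ℝ) : ℝ :=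
  ((Polynomial.bernoulli n).map (algebraMap ℚ ℝ)).eval x

noncomputable def bcoef (n : ℕ) : ℝ := ((bernoulli n : ℚ) : ℝ) / n.factorial

private lemma bern_abs_le (n : ℕ) : |bcoef n| ≤ 8 / (2 * π) ^ n := by
  have hπ : (0:ℝ) < π := Real.pi_pos
  have habs : |bcoef n| = |((bernoulli n : ℚ) : ℝ)| / n.factorial := by
    rw [bcoef, abs_div, Nat.abs_cast]
  rw [habs]
  rcases n with _ | _ | n
  · norm_num
  · rw [bernoulli_one, show (((-1 : ℚ)/2 : ℚ) : ℝ) = -(1/2) by norm_num, abs_neg,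
      abs_of_nonneg (by norm_num)]
    rw [div_le_div_iff₀ (by norm_num) (by positivity)]
    simp [Nat.factorial]
    nlinarith [Real.pi_le_four]
  · rcases Nat.even_or_odd (n + 2) with he | ho
    · obtain ⟨m, hm⟩ : ∃ m, n + 2 = 2 * (m + 1) := by
        obtain ⟨k, hk⟩ := he; exact ⟨k - 1, by omega⟩
      set k := m + 1 with hk
      have hk0 : k ≠ 0 := by omega
      rw [hm]
      set z : ℝ := (-1 : ℝ) ^ (k + 1) * (2 : ℝ) ^ (2 * k - 1) * π ^ (2 * k)
          * bernoulli (2 * k) / (2 * k).factorial with hzdef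
      have hz := hasSum_zeta_nat hk0
      rw [← hzdef] at hz
      have hz0 : 0 ≤ z := hz.nonneg fun n => by positivity
      have hz2 : z ≤ π ^ 2 / 6 := by
        refine hasSum_le (fun n => ?_) hz hasSum_zeta_two
        rcases Nat.eq_zero_or_pos n with rfl | hn
        · simp [zero_pow, (by omega : 2 * k ≠ 0)]
        · apply one_div_le_one_div_of_le (by positivity)
          exact pow_le_pow_right₀ (by exact_mod_cast hn) (by omega)
      have habs : z = 2 ^ (2*k-1) * π^(2*k) * (|((bernoulli (2*k):ℚ):ℝ)| / (2*k).factorial) := by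
        conv_lhs => rw [← abs_of_nonneg hz0, hzdef]
        simp only [abs_div, abs_mul, abs_pow, abs_neg, abs_one, one_pow, one_mul, abs_two,
          abs_of_nonneg hπ.le, Nat.abs_cast, mul_div_assoc]
      have hP : (0:ℝ) < 2 ^ (2*k-1) * π^(2*k) := by positivity
      have h2 : (2:ℝ)^(2*k) = 2^(2*k-1) * 2 := by
        rw [← pow_succ, Nat.sub_add_cancel (by omega)]
      have hb : |((bernoulli (2*k):ℚ):ℝ)| / (2*k).factorial = z / (2 ^ (2*k-1) * π^(2*k)) := by
        rw [habs]; field_simp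
      rw [hb]
      calc z / (2 ^ (2*k-1) * π^(2*k)) ≤ (π^2/6) / (2 ^ (2*k-1) * π^(2*k)) := by gcongr
        _ ≤ 8 / (2*π)^(2*k) := by
            rw [mul_pow, h2, div_le_div_iff₀ hP (by positivity)]
            have hπ4 : π^2 ≤ 16 := by nlinarith [Real.pi_le_four]
            nlinarith [mul_le_mul_of_nonneg_right hπ4 hP.le]
    · rw [bernoulli_eq_bernoulli'_of_ne_one (by omega),
        bernoulli'_eq_zero_of_odd ho (by omega)]
      simp
      positivity

private lemma key_coeff (n : ℕ) :
    ∑ kl ∈ Finset.HasAntidiagonal.antidiagonal n,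
      (((bernoulli kl.1 : ℚ) : ℝ) / kl.1.factorial *
        (if kl.2 = 0 then 0 else (1:ℝ)/ kl.2.factorial))
      = if n = 1 then 1 else 0 := by
  have h := congrArg (PowerSeries.coeff n) (bernoulliPowerSeries_mul_exp_sub_one ℚ)
  rw [PowerSeries.coeff_mul, PowerSeries.coeff_X] at h
  simp only [bernoulliPowerSeries, PowerSeries.coeff_mk, map_sub, PowerSeries.coeff_exp,
    PowerSeries.coeff_one, Algebra.algebraMap_self, RingHom.id_apply] at h
  have h2 : ∀ kl : ℕ × ℕ, (bernoulli kl.1 / kl.1.factorial : ℚ) *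
      ((1 / kl.2.factorial : ℚ) - if kl.2 = 0 then 1 else 0)
      = bernoulli kl.1 / kl.1.factorial * (if kl.2 = 0 then 0 else (1:ℚ)/kl.2.factorial) := by
    rintro ⟨i, j⟩
    rcases eq_or_ne j 0 with rfl | hj
    · simp [Nat.factorial]
    · simp [hj]
  rw [Finset.sum_congr rfl (fun kl _ => h2 kl)] at h
  have h4 := congrArg (fun q : ℚ => (q : ℝ)) h
  push_cast at h4
  simp only [apply_ite (fun q : ℚ => (q : ℝ))] at h4
  push_cast at h4
  rw [h4]

private lemma summable_abs_bcoef {u : ℝ} (hu2 : |u| < 2 * π) :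
    Summable fun n => ‖bcoef n * u ^ n‖ := by
  have hπ := Real.pi_pos
  have hr : |u| / (2*π) < 1 := (div_lt_one (by positivity)).2 hu2
  have hr0 : (0:ℝ) ≤ |u|/(2*π) := by positivity
  refine Summable.of_nonneg_of_le (fun n => norm_nonneg _) (fun n => ?_)
    ((summable_geometric_of_lt_one hr0 hr).mul_left 8)
  rw [norm_mul, norm_pow, Real.norm_eq_abs, Real.norm_eq_abs]
  calc |bcoef n| * |u|^n ≤ 8 / (2*π)^n * |u|^n := by
        gcongr; exact bern_abs_le n
    _ = 8 * (|u|/(2*π))^n := by rw [div_pow]; ring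

private lemma hasSum_exp' (t : ℝ) : HasSum (fun n => t ^ n / n.factorial) (Real.exp t) := by
  rw [Real.exp_eq_exp_ℝ]
  exact NormedSpace.expSeries_div_hasSum_exp t

private lemma hasSum_expm1 (t : ℝ) :
    HasSum (fun j => if j = 0 then 0 else t ^ j / j.factorial) (Real.exp t - 1) := by
  have h := (hasSum_exp' t).sub (hasSum_ite_eq 0 (1:ℝ))
  have he : (fun j => if j = 0 then (0:ℝ) else t^j / j.factorial)
      = fun j => t^j / j.factorial - (if j = 0 then 1 else 0) := by
    funext j
    rcases eq_or_ne j 0 with rfl | hj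
    · simp [Nat.factorial]
    · simp [hj]
  rw [he]
  exact h

private lemma tsum_bcoef_mul {u : ℝ} (hu : u ≠ 0) (hu2 : |u| < 2 * π) :
    (∑' n, bcoef n * u ^ n) * (Real.exp u - 1) = u := by
  have hg : Summable fun j => ‖if j = 0 then (0:ℝ) else u ^ j / j.factorial‖ := by
    refine Summable.of_nonneg_of_le (fun n => norm_nonneg _) (fun j => ?_)
      ((hasSum_exp' |u|).summable)
    rcases eq_or_ne j 0 with rfl | hj
    · simp [Nat.factorial]
    · exact le_of_eq (by simp [if_neg hj, abs_div, abs_pow])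
  rw [← (hasSum_expm1 u).tsum_eq,
    tsum_mul_tsum_eq_tsum_sum_antidiagonal_of_summable_norm (summable_abs_bcoef hu2) hg]
  have hterm : ∀ n : ℕ, ∑ kl ∈ Finset.HasAntidiagonal.antidiagonal n,
      (bcoef kl.1 * u ^ kl.1) * (if kl.2 = 0 then (0:ℝ) else u ^ kl.2 / kl.2.factorial)
      = if n = 1 then u else 0 := by
    intro n
    have : ∀ kl ∈ Finset.HasAntidiagonal.antidiagonal n,
        (bcoef kl.1 * u ^ kl.1) * (if kl.2 = 0 then (0:ℝ) else u ^ kl.2 / kl.2.factorial)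
        = u ^ n * (((bernoulli kl.1 : ℚ):ℝ) / kl.1.factorial *
            (if kl.2 = 0 then 0 else (1:ℝ)/kl.2.factorial)) := by
      rintro ⟨i, j⟩ hij
      rw [Finset.HasAntidiagonal.mem_antidiagonal] at hij
      rcases eq_or_ne j 0 with rfl | hj
      · simp
      · simp only [if_neg hj, bcoef]
        rw [← hij, pow_add]
        ring
    rw [Finset.sum_congr rfl this, ← Finset.mul_sum, key_coeff]
    rcases eq_or_ne n 1 with rfl | hn
    · simp
    · simp [hn]
  rw [tsum_congr hterm, tsum_ite_eq]

private lemma bernoulliPoly_div_factorial (n : ℕ) (x : ℝ) :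
    bernoulliPoly n x / n.factorial
      = ∑ kl ∈ Finset.HasAntidiagonal.antidiagonal n, bcoef kl.1 * (x ^ kl.2 / kl.2.factorial) := by
  have h1 : bernoulliPoly n x
      = ∑ i ∈ Finset.range (n+1), ((bernoulli i : ℝ) * (n.choose i : ℝ)) * x ^ (n - i) := by
    rw [bernoulliPoly, Polynomial.bernoulli, Polynomial.map_sum, Polynomial.eval_finset_sum]
    refine Finset.sum_congr rfl fun i _ => ?_
    rw [Polynomial.map_monomial, Polynomial.eval_monomial]
    simp only [eq_ratCast, Rat.cast_mul, Rat.cast_natCast]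
  rw [Finset.Nat.sum_antidiagonal_eq_sum_range_succ_mk, h1, Finset.sum_div]
  refine Finset.sum_congr rfl fun i hi => ?_
  rw [Finset.mem_range] at hi
  have hle : i ≤ n := by omega
  have key : ((n.choose i : ℝ)) * i.factorial * (n-i).factorial = n.factorial := by
    exact_mod_cast congrArg (Nat.cast (R := ℝ)) (Nat.choose_mul_factorial_mul_factorial hle)
  have h0 : (n.factorial : ℝ) ≠ 0 := by positivity
  have h0i : (i.factorial : ℝ) ≠ 0 := by positivity
  have h0ni : ((n-i).factorial : ℝ) ≠ 0 := by positivity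
  rw [bcoef]
  field_simp
  linear_combination ((bernoulli i : ℚ) : ℝ) * x ^ (n - i) * key

private lemma hasSum_S {u : ℝ} (hu2 : |u| < 2 * π) (x : ℝ) :
    HasSum (fun n => bernoulliPoly n x / n.factorial * u ^ n)
      ((∑' n, bcoef n * u ^ n) * Real.exp (x * u)) := by
  have hf := summable_abs_bcoef hu2
  have hg : Summable fun j => ‖(x*u) ^ j / (j.factorial : ℝ)‖ := by
    refine ((hasSum_exp' |x*u|).summable).congr fun j => ?_
    simp [abs_div, abs_pow, abs_mul]
  have heq : ∀ n, ∑ kl ∈ Finset.HasAntidiagonal.antidiagonal n,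
      (bcoef kl.1 * u ^ kl.1) * ((x*u) ^ kl.2 / kl.2.factorial)
      = bernoulliPoly n x / n.factorial * u ^ n := by
    intro n
    rw [bernoulliPoly_div_factorial, Finset.sum_mul]
    refine Finset.sum_congr rfl ?_
    rintro ⟨i, j⟩ hij
    rw [Finset.HasAntidiagonal.mem_antidiagonal] at hij
    rw [← hij, mul_pow, pow_add]
    ring
  have hsum : Summable fun n => ∑ kl ∈ Finset.HasAntidiagonal.antidiagonal n,
      (bcoef kl.1 * u ^ kl.1) * ((x*u) ^ kl.2 / kl.2.factorial) :=
    (summable_norm_sum_mul_antidiagonal_of_summable_norm hf hg).of_norm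
  have hS : Summable fun n => bernoulliPoly n x / n.factorial * u ^ n := hsum.congr heq
  rw [Summable.hasSum_iff hS, ← tsum_congr heq,
    ← tsum_mul_tsum_eq_tsum_sum_antidiagonal_of_summable_norm hf hg,
    (hasSum_exp' (x*u)).tsum_eq]

private lemma hasSum_S' {u : ℝ} (hu : u ≠ 0) (hu2 : |u| < 2 * π) (x : ℝ) :
    HasSum (fun n => bernoulliPoly n x / n.factorial * u ^ n)
      (u * Real.exp (x * u) / (Real.exp u - 1)) := by
  have he1 : Real.exp u - 1 ≠ 0 := by
    intro h
    exact hu ((Real.exp_eq_one_iff _).1 (by linarith [sub_eq_zero.1 h]))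
  have hG : (∑' n, bcoef n * u ^ n) = u / (Real.exp u - 1) := by
    rw [eq_div_iff he1]
    exact tsum_bcoef_mul hu hu2
  have := hasSum_S hu2 x
  rw [hG] at this
  convert this using 1
  ring

/-- For `0 < |u| < 2π` and every real `x`,
`sinh((x-1/2)u) / (2 sinh(u/2)) = ∑' k ≥ 0, (B_{2k+1}(x)/(2k+1)!) u^{2k}`. -/
theorem sinh_div_sinh_eq_tsum_bernoulli (u : ℝ) (hu : u ≠ 0) (hu2 : |u| < 2 * π) (x : ℝ) :
    Real.sinh ((x - 1/2) * u) / (2 * Real.sinh (u / 2))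
      = ∑' k : ℕ, bernoulliPoly (2 * k + 1) x / (Nat.factorial (2 * k + 1) : ℝ) * u ^ (2 * k) := by
  have hA := hasSum_S' hu hu2 x
  have hB := hasSum_S' (neg_ne_zero.2 hu) (by rwa [abs_neg]) x
  have hd := hA.sub hB
  set A := u * Real.exp (x * u) / (Real.exp u - 1) with hAdef
  set B := (-u) * Real.exp (x * (-u)) / (Real.exp (-u) - 1) with hBdef
  set d : ℕ → ℝ := fun n => bernoulliPoly n x / n.factorial * u ^ n
      - bernoulliPoly n x / n.factorial * (-u) ^ n with hddef
  have hinj : Function.Injective (fun k : ℕ => 2 * k + 1) := by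
    intro a b h
    simp only at h
    omega
  have hzero : ∀ n ∉ Set.range (fun k : ℕ => 2 * k + 1), d n = 0 := by
    intro n hn
    have hev : Even n := by
      rcases Nat.even_or_odd n with h | h
      · exact h
      · obtain ⟨m, hm⟩ := h
        exact absurd (⟨m, by simp only []; omega⟩ : n ∈ Set.range fun k : ℕ => 2 * k + 1) hn
    obtain ⟨m, hm⟩ := hev
    simp only [hddef, hm]
    rw [show m + m = 2 * m by ring, pow_mul, pow_mul, neg_pow, neg_one_sq, one_mul, sub_self]
  have hodd : HasSum (fun k => d (2 * k + 1)) (A - B) :=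
    (Function.Injective.hasSum_iff hinj hzero).2 hd
  have hterm : ∀ k : ℕ, d (2*k+1) / (2*u)
      = bernoulliPoly (2*k+1) x / ((2*k+1).factorial : ℝ) * u ^ (2*k) := by
    intro k
    simp only [hddef]
    rw [Odd.neg_pow ⟨k, by ring⟩, pow_succ]
    field_simp
    ring
  have hfinal : HasSum
      (fun k => bernoulliPoly (2 * k + 1) x / (Nat.factorial (2 * k + 1) : ℝ) * u ^ (2 * k))
      ((A - B) / (2 * u)) := by
    rw [show (fun k : ℕ => bernoulliPoly (2 * k + 1) x / (Nat.factorial (2 * k + 1) : ℝ)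
        * u ^ (2 * k)) = fun k => d (2*k+1) / (2*u) from funext fun k => (hterm k).symm]
    exact hodd.div_const (2 * u)
  rw [hfinal.tsum_eq]
  -- the algebraic identity
  set E := Real.exp (u/2) with hE
  set a := Real.exp (x*u) with ha
  have hE0 : E ≠ 0 := (Real.exp_pos _).ne'
  have ha0 : a ≠ 0 := (Real.exp_pos _).ne'
  have e1 : Real.exp ((x - 1/2) * u) = a / E := by
    rw [ha, hE, ← Real.exp_sub]; ring_nf
  have e2 : Real.exp (-((x - 1/2) * u)) = E / a := by
    rw [ha, hE, ← Real.exp_sub]; ring_nf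
  have e3 : Real.exp u = E * E := by
    rw [hE, ← Real.exp_add]; ring_nf
  have e4 : Real.exp (-u) = (E * E)⁻¹ := by rw [Real.exp_neg, e3]
  have e5 : Real.exp (-(u/2)) = E⁻¹ := Real.exp_neg (u/2)
  have e6 : Real.exp (x * -u) = a⁻¹ := by
    rw [show x * -u = -(x*u) by ring, Real.exp_neg, ha]
  have hb1 : E * E - 1 ≠ 0 := by
    rw [← e3]
    intro h
    exact hu ((Real.exp_eq_one_iff u).1 (sub_eq_zero.1 h))
  have hb2 : (E * E)⁻¹ - 1 ≠ 0 := by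
    rw [← e4]
    intro h
    exact hu (neg_eq_zero.1 ((Real.exp_eq_one_iff (-u)).1 (sub_eq_zero.1 h)))
  have hsinh2 : E - E⁻¹ ≠ 0 := by
    have hs : Real.sinh (u / 2) ≠ 0 := by
      rw [Real.sinh_ne_zero]; exact div_ne_zero hu two_ne_zero
    rw [Real.sinh_eq, e5, ← hE] at hs
    intro h; exact hs (by rw [h]; norm_num)
  have h1m : 1 - E * E ≠ 0 := by
    intro h; apply hb1; linarith
  have e7 : (E * E)⁻¹ - 1 = (1 - E * E) / (E * E) := by field_simp
  rw [Real.sinh_eq, Real.sinh_eq, hAdef, hBdef, e1, e2, e3, e4, e5, e6, ← hE, e7]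
  field_simp
  ring_nf
  rw [show (1:ℝ) - E^2 = -(-1 + E^2) by ring, inv_neg]
  ring
end

section
/- For every integer L ≥ 0 and every real u > 0, the function x ↦ S_{L+1}(x,u) has on the interval (0,1/2) exactly one critical point x_m ∈ (0,1/2) (i.e. a unique point where its derivative in x vanishes); moreover x ↦ S_{L+1}(x,u) is strictly increasing on (0, x_m) and strictly decreasing on (x_m, 1/2). -/
open Real

/-- For an integer `L ≥ -1`, `S_L(x,u) = (-1)^L (sinh((x-1/2)u)/(2 sinh(u/2))
    - ∑_{k=0}^{L} (B_{2k+1}(x)/(2k+1)!) u^{2k})`, the empty sum (for `L = -1`) being zero. -/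
noncomputable def S (L : ℤ) (x u : ℝ) : ℝ :=
  (-1 : ℝ) ^ L * (Real.sinh ((x - 1/2) * u) / (2 * Real.sinh (u / 2))
    - ∑ k ∈ Finset.range (L + 1).toNat,
        bernoulliPoly (2 * k + 1) x / (Nat.factorial (2 * k + 1) : ℝ) * u ^ (2 * k))

/-! ### Auxiliary facts about Bernoulli polynomials -/

lemma bern_comp_one_sub (n : ℕ) :
    (Polynomial.bernoulli n).comp (1 - Polynomial.X) =
      Polynomial.C ((-1 : ℚ)^n) * Polynomial.bernoulli n := by
  induction n with
  | zero => simp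
  | succ n ih =>
    have hder : Polynomial.derivative ((Polynomial.bernoulli (n+1)).comp (1 - Polynomial.X)
        - Polynomial.C ((-1 : ℚ)^(n+1)) * Polynomial.bernoulli (n+1)) = 0 := by
      rw [Polynomial.derivative_sub, Polynomial.derivative_comp_one_sub_X,
        Polynomial.derivative_bernoulli_add_one, Polynomial.derivative_C_mul,
        Polynomial.derivative_bernoulli_add_one]
      simp only [Polynomial.mul_comp, Polynomial.add_comp, Polynomial.natCast_comp,
        Polynomial.one_comp, ih, pow_succ, map_mul, map_neg, map_one, mul_neg, mul_one]
      ring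
    have hc := Polynomial.eq_C_of_derivative_eq_zero hder
    have he : ((Polynomial.bernoulli (n+1)).comp (1 - Polynomial.X)
        - Polynomial.C ((-1 : ℚ)^(n+1)) * Polynomial.bernoulli (n+1)).eval 0 = 0 := by
      simp [Polynomial.eval_comp, Polynomial.bernoulli_eval_one,
        Polynomial.bernoulli_eval_zero, bernoulli'_eq_bernoulli]
    rw [Polynomial.coeff_zero_eq_eval_zero, he, Polynomial.C_0] at hc
    linear_combination hc

lemma bernoulliPoly_eq_ratCast (n : ℕ) (q : ℚ) :
    bernoulliPoly n (q : ℝ) = ((Polynomial.bernoulli n).eval q : ℚ) := by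
  have : ((q : ℝ)) = algebraMap ℚ ℝ q := by norm_num
  rw [bernoulliPoly, this, Polynomial.eval_map, Polynomial.eval₂_at_apply]
  norm_num

lemma bernoulliPoly_odd_half (k : ℕ) : bernoulliPoly (2*k+1) (1/2) = 0 := by
  have h : (Polynomial.bernoulli (2*k+1)).eval (1/2 : ℚ) = 0 := by
    have := congrArg (Polynomial.eval (1/2 : ℚ)) (bern_comp_one_sub (2*k+1))
    simp [Polynomial.eval_comp, pow_succ, pow_mul] at this
    linarith
  have h2 : ((1:ℝ)/2) = ((1/2 : ℚ) : ℝ) := by norm_num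
  rw [h2, bernoulliPoly_eq_ratCast, h]
  norm_num

lemma bernoulliPoly_odd_zero (k : ℕ) (hk : 1 ≤ k) : bernoulliPoly (2*k+1) 0 = 0 := by
  have h0 : ((0:ℝ)) = ((0 : ℚ) : ℝ) := by norm_num
  rw [h0, bernoulliPoly_eq_ratCast, Polynomial.bernoulli_eval_zero,
    bernoulli_eq_bernoulli'_of_ne_one (by omega),
    bernoulli'_eq_zero_of_odd ⟨k, by omega⟩ (by omega)]

lemma bernoulliPoly_one_zero : bernoulliPoly 1 0 = -(1/2) := by
  have h0 : ((0:ℝ)) = ((0 : ℚ) : ℝ) := by norm_num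
  rw [h0, bernoulliPoly_eq_ratCast, Polynomial.bernoulli_eval_zero, bernoulli_one]
  norm_num

lemma hasDerivAt_bernoulliPoly (n : ℕ) (x : ℝ) :
    HasDerivAt (fun y => bernoulliPoly n y) ((n : ℝ) * bernoulliPoly (n - 1) x) x := by
  have h := Polynomial.hasDerivAt ((Polynomial.bernoulli n).map (algebraMap ℚ ℝ)) x
  rw [Polynomial.derivative_map, Polynomial.derivative_bernoulli, Polynomial.map_mul,
    Polynomial.map_natCast] at h
  simpa [bernoulliPoly] using h

/-! ### The functions `T` and `T'` -/

noncomputable def T (u : ℝ) (m : ℕ) (x : ℝ) : ℝ :=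
  Real.sinh ((x - 1/2) * u) / (2 * Real.sinh (u / 2)) -
    ∑ k ∈ Finset.range m,
      bernoulliPoly (2 * k + 1) x / (Nat.factorial (2 * k + 1) : ℝ) * u ^ (2 * k)

noncomputable def T' (u : ℝ) (m : ℕ) (x : ℝ) : ℝ :=
  u * Real.cosh ((x - 1/2) * u) / (2 * Real.sinh (u / 2)) -
    ∑ k ∈ Finset.range m,
      bernoulliPoly (2 * k) x / (Nat.factorial (2 * k) : ℝ) * u ^ (2 * k)

lemma hasDerivAt_T (u : ℝ) (m : ℕ) (x : ℝ) :
    HasDerivAt (fun y => T u m y) (T' u m x) x := by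
  have hlin : HasDerivAt (fun y : ℝ => (y - 1/2) * u) u x := by
    have := ((hasDerivAt_id x).sub_const (1/2)).mul_const u; rwa [one_mul] at this
  have h1 : HasDerivAt (fun y : ℝ => Real.sinh ((y - 1/2) * u) / (2 * Real.sinh (u / 2)))
      (u * Real.cosh ((x - 1/2) * u) / (2 * Real.sinh (u / 2))) x := by
    have := (hlin.sinh).div_const (2 * Real.sinh (u / 2))
    refine this.congr_deriv ?_
    ring
  have h2 : HasDerivAt (fun y : ℝ => ∑ k ∈ Finset.range m,
      bernoulliPoly (2 * k + 1) y / (Nat.factorial (2 * k + 1) : ℝ) * u ^ (2 * k))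
      (∑ k ∈ Finset.range m,
        bernoulliPoly (2 * k) x / (Nat.factorial (2 * k) : ℝ) * u ^ (2 * k)) x := by
    apply HasDerivAt.fun_sum
    intro k _
    have hb := ((hasDerivAt_bernoulliPoly (2 * k + 1) x).div_const
      (Nat.factorial (2 * k + 1) : ℝ)).mul_const (u ^ (2 * k))
    refine hb.congr_deriv ?_
    have hne : (Nat.factorial (2 * k) : ℝ) ≠ 0 := Nat.cast_ne_zero.mpr (Nat.factorial_ne_zero _)
    rw [Nat.add_sub_cancel, Nat.factorial_succ]
    push_cast
    field_simp
  exact h1.sub h2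

lemma hasDerivAt_T' (u : ℝ) (m : ℕ) (x : ℝ) :
    HasDerivAt (fun y => T' u (m + 1) y) (u ^ 2 * T u m x) x := by
  have hlin : HasDerivAt (fun y : ℝ => (y - 1/2) * u) u x := by
    have := ((hasDerivAt_id x).sub_const (1/2)).mul_const u; rwa [one_mul] at this
  have h1 : HasDerivAt (fun y : ℝ => u * Real.cosh ((y - 1/2) * u) / (2 * Real.sinh (u / 2)))
      (u ^ 2 * Real.sinh ((x - 1/2) * u) / (2 * Real.sinh (u / 2))) x := by
    have := ((hlin.cosh).const_mul u).div_const (2 * Real.sinh (u / 2))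
    refine this.congr_deriv ?_
    ring
  have h2 : HasDerivAt (fun y : ℝ => ∑ k ∈ Finset.range (m + 1),
      bernoulliPoly (2 * k) y / (Nat.factorial (2 * k) : ℝ) * u ^ (2 * k))
      (∑ k ∈ Finset.range (m + 1),
        ((2 * k : ℕ) : ℝ) * bernoulliPoly (2 * k - 1) x / (Nat.factorial (2 * k) : ℝ)
          * u ^ (2 * k)) x := by
    apply HasDerivAt.fun_sum
    intro k _
    exact ((hasDerivAt_bernoulliPoly (2 * k) x).div_const
      (Nat.factorial (2 * k) : ℝ)).mul_const (u ^ (2 * k))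
  have hsum : ∑ k ∈ Finset.range (m + 1),
      ((2 * k : ℕ) : ℝ) * bernoulliPoly (2 * k - 1) x / (Nat.factorial (2 * k) : ℝ)
        * u ^ (2 * k)
      = u ^ 2 * ∑ k ∈ Finset.range m,
        bernoulliPoly (2 * k + 1) x / (Nat.factorial (2 * k + 1) : ℝ) * u ^ (2 * k) := by
    rw [Finset.sum_range_succ', Finset.mul_sum]
    simp only [Nat.mul_zero, Nat.cast_zero, zero_mul, zero_div, pow_zero, add_zero]
    apply Finset.sum_congr rfl
    intro k _
    have e1 : 2 * (k + 1) - 1 = 2 * k + 1 := by omega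
    have e2 : 2 * (k + 1) = (2 * k + 1) + 1 := by omega
    rw [e1, e2, Nat.factorial_succ]
    have hne : (Nat.factorial (2 * k + 1) : ℝ) ≠ 0 := Nat.cast_ne_zero.mpr (Nat.factorial_ne_zero _)
    push_cast
    field_simp
    ring
  rw [show u ^ 2 * T u m x = u ^ 2 * Real.sinh ((x - 1/2) * u) / (2 * Real.sinh (u / 2))
      - u ^ 2 * ∑ k ∈ Finset.range m,
        bernoulliPoly (2 * k + 1) x / (Nat.factorial (2 * k + 1) : ℝ) * u ^ (2 * k) by
    rw [T]; ring]
  rw [← hsum]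
  exact h1.sub h2

lemma T_zero (u : ℝ) (hu : 0 < u) (m : ℕ) : T u (m + 1) 0 = 0 := by
  have hs : Real.sinh ((0 - 1/2) * u) = -Real.sinh (u / 2) := by
    rw [show ((0:ℝ) - 1/2) * u = -(u/2) by ring, Real.sinh_neg]
  have hsp : (0:ℝ) < Real.sinh (u / 2) := Real.sinh_pos_iff.mpr (by linarith)
  rw [T, hs, Finset.sum_range_succ']
  have hz : ∀ k ∈ Finset.range m,
      bernoulliPoly (2 * (k+1) + 1) 0 / (Nat.factorial (2 * (k+1) + 1) : ℝ) * u ^ (2 * (k+1))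
        = 0 := by
    intro k _
    rw [bernoulliPoly_odd_zero (k+1) (by omega)]
    ring
  rw [Finset.sum_congr rfl hz]
  simp [bernoulliPoly_one_zero]
  field_simp
  ring

lemma T_half (u : ℝ) (m : ℕ) : T u m (1/2) = 0 := by
  rw [T, show ((1:ℝ)/2 - 1/2) * u = 0 by ring, Real.sinh_zero]
  have hz : ∀ k ∈ Finset.range m,
      bernoulliPoly (2 * k + 1) (1/2) / (Nat.factorial (2 * k + 1) : ℝ) * u ^ (2 * k) = 0 := by
    intro k _
    rw [bernoulliPoly_odd_half k]
    ring
  rw [Finset.sum_congr rfl hz]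
  simp

lemma T_half' (u : ℝ) (m : ℕ) : T u m (2⁻¹ : ℝ) = 0 := by
  rw [show (2⁻¹ : ℝ) = 1/2 by norm_num]
  exact T_half u m

/-! ### The functions `Q m = (-1)^m T (m+1)` -/

noncomputable def Q (u : ℝ) (m : ℕ) (x : ℝ) : ℝ := (-1 : ℝ)^m * T u (m + 1) x

lemma hasDerivAt_Q (u : ℝ) (m : ℕ) (x : ℝ) :
    HasDerivAt (Q u m) ((-1 : ℝ)^m * T' u (m + 1) x) x :=
  (hasDerivAt_T u (m + 1) x).const_mul _

lemma deriv2_Q (u : ℝ) (m : ℕ) (x : ℝ) :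
    deriv (deriv (Q u m)) x = (-1 : ℝ)^m * (u ^ 2 * T u m x) := by
  have h1 : deriv (Q u m) = fun y => (-1 : ℝ)^m * T' u (m + 1) y :=
    funext fun y => (hasDerivAt_Q u m y).deriv
  rw [h1]
  exact ((hasDerivAt_T' u m x).const_mul _).deriv

/-! ### Analytic core lemmas -/

open Set in
lemma pos_of_concave_aux {f : ℝ → ℝ} (hc : ContinuousOn f (Icc 0 (1/2)))
    (h2 : ∀ x ∈ Ioo (0:ℝ) (1/2), deriv (deriv f) x < 0)
    (h0 : f 0 = 0) (hh : f (1/2) = 0) : ∀ x ∈ Ioo (0:ℝ) (1/2), 0 < f x := by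
  have hconc : StrictConcaveOn ℝ (Icc 0 (1/2)) f := by
    apply strictConcaveOn_of_deriv2_neg (convex_Icc _ _) hc
    intro x hx
    rw [interior_Icc] at hx
    show deriv (deriv f) x < 0
    exact h2 x hx
  intro x hx
  have := hconc.2 (show (0:ℝ) ∈ Icc (0:ℝ) (1/2) by norm_num)
    (show (1:ℝ)/2 ∈ Icc (0:ℝ) (1/2) by norm_num) (by norm_num)
    (show 0 < 1 - 2*x by linarith [hx.2]) (show 0 < 2*x by linarith [hx.1]) (by ring)
  rw [h0, hh, show (1 - 2*x) • (0:ℝ) + (2*x) • ((1:ℝ)/2) = x by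
    simp only [smul_eq_mul]; ring] at this
  simpa using this

open Set in
lemma unique_crit_aux {f g h : ℝ → ℝ}
    (hfg : ∀ x, HasDerivAt f (g x) x)
    (hgh : ∀ x, HasDerivAt g (h x) x)
    (hneg : ∀ x ∈ Ioo (0:ℝ) (1/2), h x < 0)
    (h0 : f 0 = 0) (hh : f (1/2) = 0) :
    ∃ xm ∈ Ioo (0:ℝ) (1/2),
      (∀ y ∈ Ioo (0:ℝ) (1/2), deriv f y = 0 ↔ y = xm) ∧
      StrictMonoOn f (Ioo 0 xm) ∧ StrictAntiOn f (Ioo xm (1/2)) := by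
  have hfc : Continuous f := continuous_iff_continuousAt.mpr fun x => (hfg x).continuousAt
  have hgc : Continuous g := continuous_iff_continuousAt.mpr fun x => (hgh x).continuousAt
  have hderivf : deriv f = g := funext fun x => (hfg x).deriv
  have hderivg : deriv g = h := funext fun x => (hgh x).deriv
  have hganti : StrictAntiOn g (Icc 0 (1/2)) := by
    apply strictAntiOn_of_deriv_neg (convex_Icc _ _) hgc.continuousOn
    intro x hx
    rw [interior_Icc] at hx
    rw [hderivg]
    exact hneg x hx
  have hfpos : ∀ x ∈ Ioo (0:ℝ) (1/2), 0 < f x := by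
    apply pos_of_concave_aux hfc.continuousOn _ h0 hh
    intro x hx
    rw [hderivf, hderivg]
    exact hneg x hx
  obtain ⟨c1, hc1, hc1'⟩ := exists_hasDerivAt_eq_slope f g (show (0:ℝ) < 1/4 by norm_num)
    hfc.continuousOn (fun x _ => hfg x)
  obtain ⟨c2, hc2, hc2'⟩ := exists_hasDerivAt_eq_slope f g (show (1:ℝ)/4 < 1/2 by norm_num)
    hfc.continuousOn (fun x _ => hfg x)
  have hq : 0 < f (1/4) := hfpos (1/4) (by norm_num)
  have hc1pos : 0 < g c1 := by
    rw [hc1', h0]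
    apply div_pos <;> linarith
  have hc2neg : g c2 < 0 := by
    rw [hc2', hh]
    apply div_neg_of_neg_of_pos <;> linarith
  have hcc : c1 < c2 := lt_trans hc1.2 hc2.1
  have h0mem : (0:ℝ) ∈ Ioo (g c2) (g c1) := ⟨hc2neg, hc1pos⟩
  obtain ⟨xm, hxm, hgxm⟩ := intermediate_value_Ioo' hcc.le hgc.continuousOn h0mem
  have hxmI : xm ∈ Ioo (0:ℝ) (1/2) :=
    ⟨lt_trans hc1.1 hxm.1, lt_trans hxm.2 hc2.2⟩
  have hxmIcc : xm ∈ Icc (0:ℝ) (1/2) := ⟨hxmI.1.le, hxmI.2.le⟩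
  refine ⟨xm, hxmI, ?_, ?_, ?_⟩
  · intro y hy
    rw [hderivf]
    constructor
    · intro hgy
      by_contra hne
      rcases lt_or_gt_of_ne hne with hlt | hlt
      · have := hganti ⟨hy.1.le, hy.2.le⟩ hxmIcc hlt
        rw [hgy, hgxm] at this
        exact lt_irrefl 0 this
      · have := hganti hxmIcc ⟨hy.1.le, hy.2.le⟩ hlt
        rw [hgy, hgxm] at this
        exact lt_irrefl 0 this
    · rintro rfl
      exact hgxm
  · apply strictMonoOn_of_deriv_pos (convex_Ioo _ _) hfc.continuousOn
    intro y hy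
    rw [interior_Ioo] at hy
    rw [hderivf]
    have : g xm < g y := hganti ⟨hy.1.le, le_trans hy.2.le hxmI.2.le⟩ hxmIcc hy.2
    rw [hgxm] at this
    exact this
  · apply strictAntiOn_of_deriv_neg (convex_Ioo _ _) hfc.continuousOn
    intro y hy
    rw [interior_Ioo] at hy
    rw [hderivf]
    have : g y < g xm := hganti hxmIcc ⟨le_trans hxmI.1.le hy.1.le, hy.2.le⟩ hy.1
    rw [hgxm] at this
    exact this

/-! ### Positivity of `Q` -/

open Set in
lemma Q_pos (u : ℝ) (hu : 0 < u) : ∀ m : ℕ, ∀ x ∈ Ioo (0:ℝ) (1/2), 0 < Q u m x := by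
  have hQcont : ∀ m : ℕ, ContinuousOn (Q u m) (Icc (0:ℝ) (1/2)) := fun m =>
    (continuous_iff_continuousAt.mpr fun x => (hasDerivAt_Q u m x).continuousAt).continuousOn
  have hsp : (0:ℝ) < Real.sinh (u / 2) := Real.sinh_pos_iff.mpr (by linarith)
  intro m
  induction m with
  | zero =>
    apply pos_of_concave_aux (hQcont 0) _ (by simp [Q, T_zero u hu 0]) (by simp [Q, T_half, T_half'])
    intro x hx
    rw [deriv2_Q]
    simp only [pow_zero, one_mul]
    have h1 : Real.sinh ((x - 1/2) * u) < 0 := by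
      apply Real.sinh_neg_iff.mpr
      have := hx.2
      nlinarith
    have hT : T u 0 x < 0 := by
      rw [T]
      simp only [Finset.range_zero, Finset.sum_empty, sub_zero]
      exact div_neg_of_neg_of_pos h1 (by linarith)
    have hu2 : (0:ℝ) < u ^ 2 := by positivity
    exact mul_neg_of_pos_of_neg hu2 hT
  | succ m ih =>
    apply pos_of_concave_aux (hQcont (m+1)) _ (by simp [Q, T_zero u hu (m+1)])
      (by simp [Q, T_half, T_half'])
    intro x hx
    rw [deriv2_Q]
    have hq : 0 < Q u m x := ih x hx
    have hrw : (-1:ℝ)^(m+1) * (u ^ 2 * T u (m+1) x)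
        = -(u ^ 2 * ((-1:ℝ)^m * T u (m+1) x)) := by
      rw [pow_succ]; ring
    rw [hrw]
    have hq' : 0 < (-1:ℝ)^m * T u (m+1) x := hq
    have hu2 : (0:ℝ) < u ^ 2 := by positivity
    nlinarith

/-- For every integer `L ≥ 0` and every `u > 0`, the function
`x ↦ S_{L+1}(x,u)` has on `(0,1/2)` exactly one critical point `xm`, is strictly
increasing on `(0, xm)` and strictly decreasing on `(xm, 1/2)`. -/
theorem S_unique_critical_point (L : ℤ) (hL : 0 ≤ L) (u : ℝ) (hu : 0 < u) :
    ∃ xm ∈ Set.Ioo (0 : ℝ) (1/2),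
      (∀ y ∈ Set.Ioo (0 : ℝ) (1/2), deriv (fun x => S (L + 1) x u) y = 0 ↔ y = xm) ∧
      StrictMonoOn (fun x => S (L + 1) x u) (Set.Ioo 0 xm) ∧
      StrictAntiOn (fun x => S (L + 1) x u) (Set.Ioo xm (1/2)) := by
  obtain ⟨m, rfl⟩ : ∃ m : ℕ, L = (m : ℤ) := ⟨L.toNat, (Int.toNat_of_nonneg hL).symm⟩
  have hfeq : (fun x => S ((m : ℤ) + 1) x u) = Q u (m + 1) := by
    funext x
    have e2 : ((m:ℤ) + 1 + 1).toNat = m + 1 + 1 := by omega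
    have e1 : (-1:ℝ)^((m:ℤ)+1) = (-1:ℝ)^(m+1) := by
      rw [show ((m:ℤ)+1) = ((m+1:ℕ):ℤ) from by push_cast; ring, zpow_natCast]
    rw [S, e2, e1, Q, T]
  rw [hfeq]
  apply unique_crit_aux (g := fun x => (-1:ℝ)^(m+1) * T' u (m + 2) x)
    (h := fun x => (-1:ℝ)^(m+1) * (u ^ 2 * T u (m + 1) x))
  · exact fun x => hasDerivAt_Q u (m+1) x
  · exact fun x => (hasDerivAt_T' u (m+1) x).const_mul _
  · intro x hx
    have hq : 0 < (-1:ℝ)^m * T u (m+1) x := Q_pos u hu m x hx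
    have hrw : (-1:ℝ)^(m+1) * (u ^ 2 * T u (m+1) x)
        = -(u ^ 2 * ((-1:ℝ)^m * T u (m+1) x)) := by
      rw [pow_succ]; ring
    rw [hrw]
    have hu2 : (0:ℝ) < u ^ 2 := by positivity
    nlinarith
  · show Q u (m+1) 0 = 0
    simp [Q, T_zero u hu (m+1)]
  · show Q u (m+1) (1/2) = 0
    simp [Q, T_half, T_half']
end
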